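/- The GEL-to-CIEL translation q preserves satisfiability from GEL to CIEL: given a model (M, x) of a GEL formula φ over agent set Ag, the CIEL model obtained by keeping the same worlds, indistinguishability relations, and world valuation, and interpreting each fresh agent atom p_a as the singleton {a}, satisfies the translation q(φ) at x, where q commutes with all Boolean connectives and maps C_G φ to C_{⋁_{a∈G} p_a} q(φ). -/

import Mathlib

/-- Agent formulae: falsum, an atom `p_a` per agent name `a`, and disjunction. -/
inductive AgF (Ag : Type) : Type
  | bot
  | atom (a : Ag)
  | or (ψ χ : AgF Ag)

/-- GEL formulae over agent set `Ag` and world atoms `At`. -/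
inductive GF (Ag At : Type) : Type
  | bot
  | atom (p : At)
  | not (φ : GF Ag At)
  | and (φ χ : GF Ag At)
  | C (G : Finset Ag) (φ : GF Ag At)

/-- CIEL formulae whose agent formulae come from `AgF Ag`. -/
inductive CF (Ag At : Type) : Type
  | bot
  | atom (p : At)
  | not (φ : CF Ag At)
  | and (φ χ : CF Ag At)
  | C (ψ : AgF Ag) (φ : CF Ag At)

/-- The disjunction `⋁_{a ∈ l} p_a`. -/
def bigOr {Ag : Type} (l : List Ag) : AgF Ag :=
  l.foldr (fun a ψ => .or (.atom a) ψ) .bot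

/-- The translation `q`: commutes with Boolean connectives and maps
`C_G φ` to `C_{⋁_{a∈G} p_a} q(φ)`. -/
noncomputable def q {Ag At : Type} : GF Ag At → CF Ag At
  | .bot => .bot
  | .atom p => .atom p
  | .not φ => .not (q φ)
  | .and φ χ => .and (q φ) (q χ)
  | .C G φ => .C (bigOr G.toList) (q (φ))

/-- Extension of an agent formula, given a valuation `V` of the agent atoms
over a set `Ag'` of agents. -/
def extA {Ag Ag' : Type} (V : Ag → Set Ag') : AgF Ag → Set Ag'
  | .bot => ∅
  | .atom a => V a
  | .or ψ χ => extA V ψ ∪ extA V χ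

/-- GEL satisfaction: `x ⊨ C_G φ` iff every `y` with `x ∼_G y` satisfies `φ`,
where `∼_G = (⋃_{a∈G} ∼_a)*`. -/
def satG {X Ag At : Type} (sim : Ag → X → X → Prop) (val : At → Set X) :
    X → GF Ag At → Prop
  | _, .bot => False
  | x, .atom p => x ∈ val p
  | x, .not φ => ¬ satG sim val x φ
  | x, .and φ χ => satG sim val x φ ∧ satG sim val x χ
  | x, .C G φ =>
      ∀ y, Relation.ReflTransGen (fun u v => ∃ a ∈ G, sim a u v) x y →
        satG sim val y φ

/-- CIEL satisfaction over a model with agents `Ag'`, agent-atom valuation `V`,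
and per-agent relations `sim`. -/
def satC {X Ag Ag' At : Type} (V : Ag → Set Ag') (sim : Ag' → X → X → Prop)
    (val : At → Set X) : X → CF Ag At → Prop
  | _, .bot => False
  | x, .atom p => x ∈ val p
  | x, .not φ => ¬ satC V sim val x φ
  | x, .and φ χ => satC V sim val x φ ∧ satC V sim val x χ
  | x, .C ψ φ =>
      ∀ y, Relation.ReflTransGen (fun u v => ∃ b ∈ extA V ψ, sim b u v) x y →
        satC V sim val y φ

/-- The translation `q` preserves satisfaction from GEL to CIEL: keeping the
same worlds, relations and world valuation, and interpreting each agent atom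
`p_a` as the singleton `{a}`, a model of `φ` at `x` yields a model of
`q(φ)` at `x`. -/
lemma extA_bigOr {Ag : Type} (l : List Ag) :
    extA (fun a => ({a} : Set Ag)) (bigOr l) = {a | a ∈ l} := by
  induction l with
  | nil => simp [bigOr, extA]
  | cons b t ih =>
      simp only [bigOr, List.foldr] at ih ⊢
      simp [extA, ih, Set.ext_iff]

lemma sat_iff {X Ag At : Type} (sim : Ag → X → X → Prop) (val : At → Set X)
    (φ : GF Ag At) (x : X) :
    satG sim val x φ ↔ satC (fun a => ({a} : Set Ag)) sim val x (q φ) := by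
  induction φ generalizing x with
  | bot => simp [satG, satC, q]
  | atom p => simp [satG, satC, q]
  | not φ ih => simp [satG, satC, q, ih]
  | and φ χ ih1 ih2 => simp [satG, satC, q, ih1, ih2]
  | C G φ ih =>
      simp only [satG, satC, q, extA_bigOr, ih]
      constructor <;> intro h y hy <;> apply h y <;>
        · refine Relation.ReflTransGen.mono ?_ x y hy
          rintro u v ⟨a, ha, hs⟩
          exact ⟨a, by simpa [Finset.mem_toList] using ha, hs⟩

theorem q_preserves_sat {X Ag At : Type} (sim : Ag → X → X → Prop)
    (hsim : ∀ a, Equivalence (sim a)) (val : At → Set X)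
    (φ : GF Ag At) (x : X) (h : satG sim val x φ) :
    satC (fun a => ({a} : Set Ag)) sim val x (q φ) :=
  (sat_iff sim val φ x).mp h
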